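/- Let Φ = {φ_n}_{n=1}^N ⊆ ℂ^M yield intensity measurements A(x) = (|⟨x,φ_n⟩|²)_n that are injective modulo 𝕋. For θ ∈ ℂ^M, let Ψ(θ) be the 2M×N real matrix whose n-th column stacks the real and imaginary parts of ⟨θ,φ_n⟩φ_n, and let J(θ) = (4/σ²)Ψ(θ)Ψ(θ)ᵀ. If θ ∈ ℂ^M has its M-th coordinate real and strictly positive, then the (2M-1)×(2M-1) submatrix of J(θ) obtained by deleting the last row and column is positive definite. -/

import Mathlib

open Matrix

/-- The `2M × N` real matrix `Ψ(θ)` whose `n`-th column stacks the real and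
imaginary parts of `⟨θ, φ_n⟩ φ_n`. -/
noncomputable def Psi {M N : ℕ} (Φ : Fin N → Fin M → ℂ) (θ : Fin M → ℂ) :
    Fin (2 * M) → Fin N → ℝ := fun i n =>
  if h : (i : ℕ) < M then ((θ ⬝ᵥ star (Φ n)) * Φ n ⟨i, h⟩).re
  else ((θ ⬝ᵥ star (Φ n)) * Φ n ⟨(i : ℕ) - M, by have := i.isLt; omega⟩).im

theorem stmt_19 (M N : ℕ) (hM : 0 < M) (Φ : Fin N → Fin M → ℂ)
    (hinj : ∀ x y : Fin M → ℂ,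
        (∀ n, ‖star (Φ n) ⬝ᵥ x‖ ^ 2 = ‖star (Φ n) ⬝ᵥ y‖ ^ 2) →
        ∃ c : ℂ, ‖c‖ = 1 ∧ y = c • x)
    (σ : ℝ) (hσ : 0 < σ) (θ : Fin M → ℂ)
    (him : (θ ⟨M - 1, by omega⟩).im = 0)
    (hre : 0 < (θ ⟨M - 1, by omega⟩).re) :
    Matrix.PosDef (Matrix.of fun i j : Fin (2 * M - 1) =>
      (4 / σ ^ 2) * ∑ n, Psi Φ θ (Fin.castLE (by omega) i) n *
        Psi Φ θ (Fin.castLE (by omega) j) n) := by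
  rw [posDef_iff_dotProduct_mulVec]
  constructor
  · -- Hermitian
    ext i j
    simp only [conjTranspose_apply, of_apply, star_trivial]
    congr 1
    exact Finset.sum_congr rfl fun n _ => mul_comm _ _
  intro x hx
  -- rewrite the quadratic form as a sum of squares
  have key : ∀ (g : Fin (2*M-1) → Fin N → ℝ),
      (∑ i, x i * ∑ j, ((4/σ^2) * ∑ n, g i n * g j n) * x j)
      = (4/σ^2) * ∑ n, (∑ i, x i * g i n)^2 := by
    intro g
    have h1 : ∀ i : Fin (2*M-1), x i * ∑ j, ((4/σ^2) * ∑ n, g i n * g j n) * x j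
        = ∑ n, ∑ j, (4/σ^2) * (x i * g i n) * (x j * g j n) := by
      intro i
      rw [Finset.mul_sum, Finset.sum_comm]
      refine Finset.sum_congr rfl fun j _ => ?_
      rw [Finset.mul_sum, Finset.sum_mul, Finset.mul_sum]
      exact Finset.sum_congr rfl fun n _ => by ring
    simp_rw [h1]
    rw [Finset.sum_comm, Finset.mul_sum]
    refine Finset.sum_congr rfl fun n _ => ?_
    rw [pow_two (∑ i, x i * g i n), Finset.sum_mul_sum]
    rw [Finset.mul_sum]
    refine Finset.sum_congr rfl fun i _ => ?_
    rw [Finset.mul_sum]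
    exact Finset.sum_congr rfl fun j _ => by ring
  have hquad : dotProduct (star x) ((Matrix.of fun i j : Fin (2 * M - 1) =>
      (4 / σ ^ 2) * ∑ n, Psi Φ θ (Fin.castLE (by omega) i) n *
        Psi Φ θ (Fin.castLE (by omega) j) n) *ᵥ x)
      = (4/σ^2) * ∑ n, (∑ i, x i * Psi Φ θ (Fin.castLE (by omega) i) n)^2 := by
    simpa only [dotProduct, mulVec, of_apply, Pi.star_apply, star_trivial] using
      key (fun i n => Psi Φ θ (Fin.castLE (by omega) i) n)
  rw [hquad]
  have hc : 0 < 4 / σ^2 := by positivity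
  have hnn : (0:ℝ) ≤ ∑ n, (∑ i, x i * Psi Φ θ (Fin.castLE (by omega) i) n)^2 :=
    Finset.sum_nonneg fun n _ => sq_nonneg _
  rcases hnn.lt_or_eq with hlt | heq0
  · exact mul_pos hc hlt
  -- contradiction branch: all column sums vanish
  exfalso
  have hTz : ∀ n : Fin N, (∑ i, x i * Psi Φ θ (Fin.castLE (by omega) i) n) = 0 := by
    intro n
    have := (Finset.sum_eq_zero_iff_of_nonneg (fun n _ => sq_nonneg
      (∑ i, x i * Psi Φ θ (Fin.castLE (by omega) i) n))).1 heq0.symm n (Finset.mem_univ n)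
    exact pow_eq_zero_iff (two_ne_zero) |>.1 this
  set xx : ℕ → ℝ := fun i => if h : i < 2*M-1 then x ⟨i,h⟩ else 0 with hxx
  set z : Fin M → ℂ := fun j => Complex.mk (xx j) (xx (M + j)) with hz
  -- per-n identity
  have hTn : ∀ n : Fin N, (∑ i, x i * Psi Φ θ (Fin.castLE (by omega) i) n)
      = ((θ ⬝ᵥ star (Φ n)) * (starRingEnd ℂ) (star (Φ n) ⬝ᵥ z)).re := by
    intro n
    set p : ℂ := θ ⬝ᵥ star (Φ n) with hp
    set ψ : ℕ → ℝ := fun i => if h : i < 2*M then Psi Φ θ ⟨i,h⟩ n else 0 with hψ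
    have h1 : (∑ i, x i * Psi Φ θ (Fin.castLE (by omega) i) n)
        = ∑ i ∈ Finset.range (2*M-1), xx i * ψ i := by
      rw [← Fin.sum_univ_eq_sum_range]
      refine Finset.sum_congr rfl fun i _ => ?_
      have h2 : (i:ℕ) < 2*M-1 := i.isLt
      have h3 : (i:ℕ) < 2*M := by omega
      rw [hxx, hψ]
      simp only [dif_pos h2, dif_pos h3]
      rfl
    have h2 : ∑ i ∈ Finset.range (2*M-1), xx i * ψ i
        = ∑ i ∈ Finset.range (2*M), xx i * ψ i := by
      refine Finset.sum_subset (Finset.range_subset_range.2 (by omega)) fun i _ hi => ?_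
      have : xx i = 0 := by
        rw [hxx]; rw [Finset.mem_range, not_lt] at hi
        exact dif_neg (by omega)
      rw [this]; ring
    have h3 : ∑ i ∈ Finset.range (2*M), xx i * ψ i
        = (∑ i ∈ Finset.range M, xx i * ψ i) + ∑ i ∈ Finset.range M, xx (M+i) * ψ (M+i) := by
      have : 2*M = M + M := by ring
      rw [this, Finset.sum_range_add]
    have hψ1 : ∀ j : Fin M, ψ (j:ℕ) = (p * Φ n j).re := by
      intro j
      have hj : (j:ℕ) < 2*M := by omega
      simp only [hψ, dif_pos hj, Psi, dif_pos j.isLt, Fin.eta, hp]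
    have hψ2 : ∀ j : Fin M, ψ (M + (j:ℕ)) = (p * Φ n j).im := by
      intro j
      have hj : M + (j:ℕ) < 2*M := by omega
      have hj2 : ¬ (M + (j:ℕ) < M) := by omega
      simp only [hψ, dif_pos hj, Psi, dif_neg hj2, hp]
      have : (⟨M + (j:ℕ) - M, by omega⟩ : Fin M) = j := by
        apply Fin.ext; simp
      rw [this]
    rw [h1, h2, h3, ← Fin.sum_univ_eq_sum_range (fun i => xx i * ψ i) M,
      ← Fin.sum_univ_eq_sum_range (fun i => xx (M+i) * ψ (M+i)) M]
    simp_rw [hψ1, hψ2]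
    rw [← Finset.sum_add_distrib]
    have : (p * (starRingEnd ℂ) (star (Φ n) ⬝ᵥ z)).re
        = ∑ j : Fin M, ((p * Φ n j).re * (z j).re + (p * Φ n j).im * (z j).im) := by
      rw [dotProduct, map_sum, Finset.mul_sum, Complex.re_sum]
      refine Finset.sum_congr rfl fun j _ => ?_
      simp [Complex.mul_re, Complex.mul_im, Pi.star_apply]
      ring
    rw [this]
    exact Finset.sum_congr rfl fun j _ => by rw [hz]; ring
  -- cross terms vanish, so the measurements of θ+z and θ-z agree
  have hA : ∀ n, ‖star (Φ n) ⬝ᵥ (θ + z)‖ ^ 2 = ‖star (Φ n) ⬝ᵥ (θ - z)‖ ^ 2 := by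
    intro n
    have h0 : ((θ ⬝ᵥ star (Φ n)) * (starRingEnd ℂ) (star (Φ n) ⬝ᵥ z)).re = 0 :=
      (hTn n).symm.trans (hTz n)
    have hpq : θ ⬝ᵥ star (Φ n) = star (Φ n) ⬝ᵥ θ := dotProduct_comm _ _
    rw [hpq] at h0
    set p : ℂ := star (Φ n) ⬝ᵥ θ
    set q : ℂ := star (Φ n) ⬝ᵥ z
    have e1 : star (Φ n) ⬝ᵥ (θ + z) = p + q := dotProduct_add _ _ _
    have e2 : star (Φ n) ⬝ᵥ (θ - z) = p - q := dotProduct_sub _ _ _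
    rw [e1, e2]
    have n1 : ‖p + q‖ ^ 2 = Complex.normSq (p + q) := by
      rw [← Complex.sq_norm]
    have n2 : ‖p - q‖ ^ 2 = Complex.normSq (p - q) := by
      rw [← Complex.sq_norm]
    rw [n1, n2, Complex.normSq_add, Complex.normSq_sub, h0]
    ring
  obtain ⟨co, hco, heqc⟩ := hinj (θ + z) (θ - z) hA
  have hcoord : ∀ j : Fin M, θ j - z j = co * (θ j + z j) := by
    intro j
    have := congrFun heqc j
    simpa using this
  -- θ is nonzero at the last coordinate
  have hθne : θ ⟨M - 1, by omega⟩ ≠ 0 := by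
    intro h
    rw [h] at hre
    simp at hre
  by_cases hco1 : co = -1
  · apply hθne
    have := hcoord ⟨M - 1, by omega⟩
    rw [hco1] at this
    have : (2:ℂ) * θ ⟨M - 1, by omega⟩ = 0 := by linear_combination this
    have h2 : (2:ℂ) ≠ 0 := two_ne_zero
    exact (mul_eq_zero.1 this).resolve_left h2
  · have h1c : (1 + co) ≠ 0 := fun h => hco1 (by linear_combination h)
    set d : ℂ := (1 - co)/(1 + co) with hd
    have hzj : ∀ j : Fin M, z j = d * θ j := by
      intro j
      rw [hd]
      field_simp
      linear_combination (-1 : ℂ) * hcoord j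
    -- d is purely imaginary
    have hnsq : co.re^2 + co.im^2 = 1 := by
      have : Complex.normSq co = 1 := by
        have := congrArg (· ^ 2) hco
        simpa [← Complex.sq_norm] using this
      simpa [Complex.normSq_apply, sq] using this
    have hdre : d.re = 0 := by
      rw [hd, Complex.div_re]
      have hnum : (1 - co).re * (1 + co).re + (1 - co).im * (1 + co).im = 0 := by
        simp only [Complex.sub_re, Complex.sub_im, Complex.add_re, Complex.add_im,
          Complex.one_re, Complex.one_im]
        nlinarith [hnsq]
      rw [← add_div, hnum, zero_div]
    -- last imaginary coordinate of z vanishes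
    have hlast : (z ⟨M - 1, by omega⟩).im = 0 := by
      rw [hz]
      show xx (M + (M-1)) = 0
      rw [hxx]
      exact dif_neg (by omega)
    have hdim : d.im = 0 := by
      have h1 := hzj ⟨M - 1, by omega⟩
      have h2 := congrArg Complex.im h1
      rw [hlast, Complex.mul_im, hdre, him] at h2
      have : d.im * (θ ⟨M - 1, by omega⟩).re = 0 := by linarith [h2.symm]
      rcases mul_eq_zero.1 this with h | h
      · exact h
      · exact absurd h (ne_of_gt hre)
    have hd0 : d = 0 := Complex.ext hdre hdim
    have hz0 : ∀ j : Fin M, z j = 0 := fun j => by rw [hzj j, hd0, zero_mul]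
    -- hence x = 0
    apply hx
    funext i
    have hi : (i:ℕ) < 2*M-1 := i.isLt
    by_cases hiM : (i:ℕ) < M
    · have := congrArg Complex.re (hz0 ⟨i, hiM⟩)
      rw [hz] at this
      simp only [Complex.zero_re] at this
      have hxxi : xx i = 0 := this
      simp only [hxx, dif_pos hi] at hxxi
      simpa using hxxi
    · have hiM2 : (i:ℕ) - M < M := by omega
      have := congrArg Complex.im (hz0 ⟨(i:ℕ) - M, hiM2⟩)
      rw [hz] at this
      simp only [Complex.zero_im] at this
      have hMi : M + ((i:ℕ) - M) = (i:ℕ) := by omega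
      rw [hMi] at this
      have hxxi : xx i = 0 := this
      simp only [hxx, dif_pos hi] at hxxi
      simpa using hxxi
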